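/- arXiv:0901.0900 — 2 statements merged into one kernel-verified Lean document; each statement's English description precedes it below -/
import Mathlib

section
/- An element A ∈ M_n(E) with invariants (a,b) is strongly regular semisimple if and only if: (1) R_a(E) = E[t]/(P_a) is an étale E-algebra, i.e. P_a is separable; and (2) Δ_{a,b} ≠ 0, i.e. the R_a(E)-linear map γ′_{a,b} : R_a(E) → Hom_E(R_a(E), E), x ↦ (y ↦ b′(xy)), is an isomorphism. -/
/-!
STATEMENT 2.  Let `E` be a field, `n ≥ 1`, `e₀`, `e₀^*` as before, `A ∈ Mₙ(E)` with invariants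
`(a,b)` (so `P_a` is the characteristic polynomial of `A` and `bᵢ = e₀^*(Aⁱe₀)`), and let `b′`
be the linear functional on `R_a(E) = E[t]/(P_a)` with `b′(tⁱ) = bᵢ` for `0 ≤ i ≤ n−1`.
Then `A` is strongly regular semisimple (separable characteristic polynomial, the `Aⁱe₀` form a
basis of `Eⁿ` and the `e₀^*Aⁱ` a basis of the dual) iff `P_a` is separable (i.e. `R_a(E)` is an
étale `E`-algebra) and `Δ_{a,b} ≠ 0`; moreover `Δ_{a,b} ≠ 0` iff the `R_a(E)`-linear map
`γ′_{a,b} : x ↦ (y ↦ b′(xy))` is an isomorphism.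
-/

open Matrix
noncomputable section

set_option maxHeartbeats 1000000 in
theorem strongly_regular_semisimple_iff_separable_and_delta_ne_zero
    (E : Type*) [Field E] (n : ℕ) (hn : 1 ≤ n)
    (i0 : Fin n) (hi0 : (i0 : ℕ) = n - 1)
    (e0 : Fin n → E) (he0 : e0 = Pi.single i0 1)
    (A : Matrix (Fin n) (Fin n) E)
    (b' : AdjoinRoot A.charpoly →ₗ[E] E)
    (hb' : ∀ i : Fin n,
      b' (AdjoinRoot.root A.charpoly ^ (i : ℕ)) = ((A ^ (i : ℕ)) *ᵥ e0) i0) :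
    ((A.charpoly.Separable ∧
        (LinearIndependent E (fun i : Fin n => (A ^ (i : ℕ)) *ᵥ e0) ∧
          Submodule.span E (Set.range fun i : Fin n => (A ^ (i : ℕ)) *ᵥ e0) = ⊤) ∧
        (LinearIndependent E (fun i : Fin n => Matrix.vecMul e0 (A ^ (i : ℕ))) ∧
          Submodule.span E (Set.range fun i : Fin n => Matrix.vecMul e0 (A ^ (i : ℕ))) = ⊤)) ↔
      (A.charpoly.Separable ∧
        (Matrix.of fun i j : Fin n =>
          b' (AdjoinRoot.root A.charpoly ^ ((i : ℕ) + (j : ℕ)))).det ≠ 0)) ∧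
    ((Matrix.of fun i j : Fin n =>
        b' (AdjoinRoot.root A.charpoly ^ ((i : ℕ) + (j : ℕ)))).det ≠ 0 ↔
      Function.Bijective fun x : AdjoinRoot A.charpoly =>
        b' ∘ₗ LinearMap.mul E (AdjoinRoot A.charpoly) x) := by
  classical
  have hchar : A.charpoly.Monic := A.charpoly_monic
  set R := AdjoinRoot A.charpoly with hR
  set r := AdjoinRoot.root A.charpoly with hrdef
  -- power basis of R
  let pb : PowerBasis E R := AdjoinRoot.powerBasis' hchar
  have hdim : pb.dim = n := by
    simp [pb, AdjoinRoot.powerBasis', Matrix.charpoly_natDegree_eq_dim]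
  have hgen : pb.gen = r := rfl
  -- the evaluation functional on matrices
  let ev : Matrix (Fin n) (Fin n) E →ₗ[E] E :=
    { toFun := fun M => (M *ᵥ e0) i0
      map_add' := fun M N => by simp [Matrix.add_mulVec]
      map_smul' := fun c M => by simp [Matrix.smul_mulVec] }
  -- algebra map R → matrices sending root to A
  have hvanish : ∀ p ∈ Ideal.span {A.charpoly}, Polynomial.aeval A p = 0 := by
    intro p hp
    obtain ⟨q, rfl⟩ := Ideal.mem_span_singleton'.mp hp
    rw [_root_.map_mul, Matrix.aeval_self_charpoly, mul_zero]
  let φ : R →ₐ[E] Matrix (Fin n) (Fin n) E :=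
    Ideal.Quotient.liftₐ (Ideal.span {A.charpoly}) (Polynomial.aeval A) hvanish
  have hφr : φ r = A := by
    show Ideal.Quotient.liftₐ _ _ hvanish (Ideal.Quotient.mk (Ideal.span {A.charpoly}) Polynomial.X) = A
    rw [Ideal.Quotient.liftₐ_apply]
    show Ideal.Quotient.lift _ _ _ (Ideal.Quotient.mk _ Polynomial.X) = A
    show Polynomial.aeval A Polynomial.X = A
    simp
  have hLb : b' = ev.comp φ.toLinearMap := by
    apply pb.basis.ext
    intro i
    have hb := pb.basis_eq_pow i
    rw [hb, hgen]
    have hlt : (i : ℕ) < n := lt_of_lt_of_le i.isLt hdim.le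
    have := hb' ⟨(i : ℕ), hlt⟩
    simp only [Fin.val_mk] at this
    rw [this]
    simp [ev, map_pow, hφr]
  have hkey : ∀ k : ℕ, b' (r ^ k) = (A ^ k) i0 i0 := by
    intro k
    rw [hLb]
    simp [ev, map_pow, hφr, he0, Matrix.mulVec_single]
  -- the two matrices
  set V : Matrix (Fin n) (Fin n) E := Matrix.of fun i j => (A ^ (i : ℕ)) i0 j with hV
  set W : Matrix (Fin n) (Fin n) E := Matrix.of fun i j => (A ^ (j : ℕ)) i i0 with hW
  have hM : (Matrix.of fun i j : Fin n => b' (r ^ ((i : ℕ) + (j : ℕ)))) = V * W := by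
    ext i j
    rw [Matrix.of_apply, hkey, pow_add, Matrix.mul_apply, Matrix.mul_apply]
    rfl
  -- descriptions of the families
  have hfam1 : (fun i : Fin n => (A ^ (i : ℕ)) *ᵥ e0) = fun i => Wᵀ i := by
    funext i; funext k
    simp [he0, hW, Matrix.mulVec_single]
  have hfam2 : (fun i : Fin n => Matrix.vecMul e0 (A ^ (i : ℕ))) = fun i => V i := by
    funext i; funext j
    simp [he0, hV, Matrix.single_vecMul]
  -- conditions for W
  have keyW : (LinearIndependent E (fun i : Fin n => (A ^ (i : ℕ)) *ᵥ e0) ∧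
      Submodule.span E (Set.range fun i : Fin n => (A ^ (i : ℕ)) *ᵥ e0) = ⊤) ↔ IsUnit W := by
    rw [hfam1]
    constructor
    · rintro ⟨h1, -⟩
      exact Matrix.linearIndependent_cols_iff_isUnit.mp h1
    · intro h
      refine ⟨Matrix.linearIndependent_cols_iff_isUnit.mpr h, ?_⟩
      rw [show (fun i => Wᵀ i) = W.col from rfl, ← Matrix.range_mulVecLin, LinearMap.range_eq_top]
      exact Matrix.mulVec_surjective_iff_isUnit.mpr h
  have keyV : (LinearIndependent E (fun i : Fin n => Matrix.vecMul e0 (A ^ (i : ℕ))) ∧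
      Submodule.span E (Set.range fun i : Fin n => Matrix.vecMul e0 (A ^ (i : ℕ))) = ⊤) ↔
      IsUnit V := by
    rw [hfam2]
    constructor
    · rintro ⟨h1, -⟩
      exact Matrix.linearIndependent_rows_iff_isUnit.mp h1
    · intro h
      refine ⟨Matrix.linearIndependent_rows_iff_isUnit.mpr h, ?_⟩
      rw [show (fun i => V i) = V.row from rfl, ← range_vecMulLinear, LinearMap.range_eq_top]
      exact Matrix.vecMul_surjective_iff_isUnit.mpr h
  have hUnit : ∀ X : Matrix (Fin n) (Fin n) E, IsUnit X ↔ X.det ≠ 0 := fun X => by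
    rw [Matrix.isUnit_iff_isUnit_det, isUnit_iff_ne_zero]
  constructor
  · -- first equivalence
    rw [hM, Matrix.det_mul]
    constructor
    · rintro ⟨hs, h1, h2⟩
      exact ⟨hs, mul_ne_zero ((hUnit V).mp (keyV.mp h2)) ((hUnit W).mp (keyW.mp h1))⟩
    · rintro ⟨hs, hd⟩
      obtain ⟨hdV, hdW⟩ := mul_ne_zero_iff.mp hd
      exact ⟨hs, keyW.mpr ((hUnit W).mpr hdW), keyV.mpr ((hUnit V).mpr hdV)⟩
  · -- second equivalence
    let γ : R →ₗ[E] (R →ₗ[E] E) :=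
      { toFun := fun x => b' ∘ₗ LinearMap.mul E R x
        map_add' := fun x y => by ext z; simp [add_mul]
        map_smul' := fun c x => by ext z; simp [smul_mul_assoc] }
    have hγeq : (fun x : R => b' ∘ₗ LinearMap.mul E R x) = ⇑γ := rfl
    let B : Module.Basis (Fin n) E R := pb.basis.reindex (finCongr hdim)
    have hB : ∀ i : Fin n, B i = r ^ (i : ℕ) := by
      intro i
      rw [Module.Basis.reindex_apply, pb.basis_eq_pow, hgen]
      rfl
    set N := LinearMap.toMatrix B B.dualBasis γ with hNdef
    have hN : N = (Matrix.of fun i j : Fin n => b' (r ^ ((i : ℕ) + (j : ℕ))))ᵀ := by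
      ext i j
      rw [hNdef, LinearMap.toMatrix_apply, Module.Basis.dualBasis_repr, Matrix.transpose_apply,
        Matrix.of_apply, hB, hB]
      show b' (r ^ (j : ℕ) * r ^ (i : ℕ)) = _
      rw [← pow_add, Nat.add_comm]
    rw [hγeq]
    constructor
    · intro hd
      have hdet : IsUnit (LinearMap.toMatrix B B.dualBasis γ).det := by
        rw [← hNdef, hN, Matrix.det_transpose, isUnit_iff_ne_zero]
        exact hd
      have h2 := (LinearEquiv.ofIsUnitDet hdet).bijective
      have h3 : ⇑(LinearEquiv.ofIsUnitDet hdet) = ⇑γ := by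
        have := LinearEquiv.coe_ofIsUnitDet hdet
        exact congrArg (DFunLike.coe) this
      rwa [h3] at h2
    · intro h
      let e : R ≃ₗ[E] (R →ₗ[E] E) := LinearEquiv.ofBijective γ h
      have hcomp : (e.symm : (R →ₗ[E] E) →ₗ[E] R) ∘ₗ γ = LinearMap.id := by
        ext x
        show e.symm (e x) = x
        exact e.symm_apply_apply x
      have hmul : (1 : Matrix (Fin n) (Fin n) E) =
          LinearMap.toMatrix B.dualBasis B (e.symm : (R →ₗ[E] E) →ₗ[E] R) * N := by
        rw [hNdef, ← LinearMap.toMatrix_comp B B.dualBasis B, hcomp, LinearMap.toMatrix_id]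
      intro hzero
      have hNdet : N.det = 0 := by
        rw [hN, Matrix.det_transpose]
        exact hzero
      have := congrArg Matrix.det hmul
      rw [Matrix.det_one, Matrix.det_mul, hNdet, mul_zero] at this
      exact one_ne_zero this
end
end

section
/- Let R be a commutative O-algebra which is finite free of rank n as an O-module, and suppose that the κ-algebra R ⊗_O κ is generated by a single element as a κ-algebra. Then R is generated by a single element as an O-algebra, and there exist a monic polynomial P ∈ O[t] of degree n and an O-algebra isomorphism O[t]/(P) ≅ R. Equivalently: if φ : O[t] → R is a surjective O-algebra homomorphism onto an O-algebra R that is finite free of rank n as an O-module, then ker(φ) is generated by a monic polynomial of degree n. -/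
/-!
STATEMENT 10.  Let `O` be a discrete valuation ring with residue field `κ` and `n ≥ 1`.  If
`R` is a commutative `O`-algebra, finite free of rank `n` as an `O`-module, such that
`R ⊗_O κ` is generated by a single element as a `κ`-algebra, then `R` is generated by one
element as an `O`-algebra and there is a monic `P ∈ O[t]` of degree `n` with
`O[t]/(P) ≅ R`.  Equivalently, for any surjective `O`-algebra map `φ : O[t] → R'` onto an
`O`-algebra `R'` finite free of rank `n`, the kernel of `φ` is generated by a monic polynomial
of degree `n`.
-/

open Polynomial

noncomputable section


lemma aux_fin {O M : Type} [CommRing O] [StrongRankCondition O]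
    [AddCommGroup M] [Module O M] [Module.Free O M] {n : ℕ} (hn : 1 ≤ n)
    (h : Module.finrank O M = n) : Module.Finite O M := by
  rw [← Module.rank_lt_aleph0_iff]
  by_contra hlt
  push_neg at hlt
  rw [Module.finrank, Cardinal.toNat_apply_of_aleph0_le hlt] at h
  omega

lemma aux_key (O : Type) [CommRing O] [IsDomain O] [IsDiscreteValuationRing O]
    (n : ℕ) (hn : 1 ≤ n)
    (R' : Type) [CommRing R'] [Algebra O R'] [Module.Free O R']
    (hr : Module.finrank O R' = n) (φ : O[X] →ₐ[O] R') (hφ : Function.Surjective φ) :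
    ∃ P : O[X], P.Monic ∧ P.natDegree = n ∧
      RingHom.ker φ.toRingHom = Ideal.span {P} ∧ Nonempty (AdjoinRoot P ≃ₐ[O] R') := by
  have : Module.Finite O R' := aux_fin hn hr
  set θ : R' := φ X with hθ
  set f : Module.End O R' := Algebra.lmul O R' θ with hf
  set P : O[X] := f.charpoly with hP
  have hmonic : P.Monic := f.charpoly_monic
  have hdeg : P.natDegree = n := by rw [hP, f.charpoly_natDegree, hr]
  have hφeq : ∀ q : O[X], φ q = aeval θ q := by
    intro q
    rw [hθ, Polynomial.aeval_algHom_apply, Polynomial.aeval_X_left_apply]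
  have haeval : aeval θ P = 0 := by
    have h1 : aeval f P = 0 := f.aeval_self_charpoly
    have h2 : aeval ((Algebra.lmul O R') θ) P = (Algebra.lmul O R') (aeval θ P) :=
      Polynomial.aeval_algHom_apply (Algebra.lmul O R') θ P
    rw [← hf, h1] at h2
    have := congrArg (fun g : Module.End O R' => g 1) h2.symm
    simpa using this
  have hPker : φ P = 0 := by rw [hφeq]; exact haeval
  set ψ : AdjoinRoot P →ₐ[O] R' := AdjoinRoot.liftAlgHom P (Algebra.ofId O R') θ
    (by rw [Algebra.toRingHom_ofId, ← Polynomial.aeval_def]; exact haeval) with hψ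
  have hψmk : ∀ q : O[X], ψ (AdjoinRoot.mk P q) = φ q := by
    intro q; rw [hψ, AdjoinRoot.liftAlgHom_mk, hφeq, Algebra.toRingHom_ofId, Polynomial.aeval_def]
  have hψsurj : Function.Surjective ψ := by
    intro y
    obtain ⟨q, rfl⟩ := hφ y
    exact ⟨AdjoinRoot.mk P q, hψmk q⟩
  set pb : PowerBasis O (AdjoinRoot P) := AdjoinRoot.powerBasis' hmonic with hpb
  have hdim : pb.dim = n := by rw [hpb, AdjoinRoot.powerBasis'_dim, hdeg]
  set b1 : Module.Basis (Fin n) O (AdjoinRoot P) := pb.basis.reindex (finCongr hdim) with hb1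
  have : Module.Finite O (AdjoinRoot P) := Module.Finite.of_basis b1
  set b2 : Module.Basis (Module.Free.ChooseBasisIndex O R') O R' := Module.Free.chooseBasis O R'
  have hcard : Fintype.card (Module.Free.ChooseBasisIndex O R') = n := by
    rw [← Module.finrank_eq_card_chooseBasisIndex, hr]
  set e : R' ≃ₗ[O] AdjoinRoot P :=
    b2.equiv b1 (Fintype.equivOfCardEq (by rw [hcard, Fintype.card_fin])) with he
  have hψinj : Function.Injective ψ := by
    have hg : Function.Surjective (e.toLinearMap ∘ₗ ψ.toLinearMap) :=
      e.surjective.comp hψsurj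
    have := OrzechProperty.injective_of_surjective_endomorphism
      (e.toLinearMap ∘ₗ ψ.toLinearMap) hg
    intro a b hab
    exact this (by simp [LinearMap.comp_apply, hab])
  have hker : RingHom.ker φ.toRingHom = Ideal.span {P} := by
    ext q
    constructor
    · intro hq
      have : ψ (AdjoinRoot.mk P q) = 0 := by rw [hψmk]; exact hq
      have h0 : AdjoinRoot.mk P q = 0 := hψinj (by simpa using this)
      rw [AdjoinRoot.mk_eq_zero] at h0
      exact Ideal.mem_span_singleton.mpr h0
    · intro hq
      obtain ⟨c, rfl⟩ := Ideal.mem_span_singleton.mp hq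
      have : φ (P * c) = 0 := by rw [map_mul, hPker, zero_mul]
      exact this
  exact ⟨P, hmonic, hdeg, hker, ⟨AlgEquiv.ofBijective ψ ⟨hψinj, hψsurj⟩⟩⟩

theorem monogenic_finite_free_algebra_over_dvr
    (O : Type) [CommRing O] [IsDomain O] [IsDiscreteValuationRing O]
    (n : ℕ) (hn : 1 ≤ n)
    (R : Type) [CommRing R] [Algebra O R] [Module.Free O R]
    (hrank : Module.finrank O R = n)
    (hgen : ∃ x : TensorProduct O (IsLocalRing.ResidueField O) R,
      Algebra.adjoin (IsLocalRing.ResidueField O) {x} = ⊤) :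
    ((∃ x : R, Algebra.adjoin O {x} = ⊤) ∧
      ∃ P : O[X], P.Monic ∧ P.natDegree = n ∧ Nonempty (AdjoinRoot P ≃ₐ[O] R)) ∧
    (∀ (R' : Type) [CommRing R'] [Algebra O R'] [Module.Free O R'],
      Module.finrank O R' = n →
      ∀ φ : O[X] →ₐ[O] R', Function.Surjective φ →
        ∃ P : O[X], P.Monic ∧ P.natDegree = n ∧
          RingHom.ker φ.toRingHom = Ideal.span {P}) := by
  have hfinR : Module.Finite O R := aux_fin hn hrank
  constructor
  · -- find a generator of R over O
    obtain ⟨x, hx⟩ := hgen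
    set κ := IsLocalRing.ResidueField O with hκ
    set j : R →ₐ[O] TensorProduct O κ R := Algebra.TensorProduct.includeRight with hjdef
    have hjsurj : Function.Surjective j := by
      intro z
      induction z using TensorProduct.induction_on with
      | zero => exact ⟨0, map_zero _⟩
      | tmul c r =>
        obtain ⟨o, rfl⟩ := Ideal.Quotient.mk_surjective c
        refine ⟨o • r, ?_⟩
        show (1 : κ) ⊗ₜ[O] (o • r) = _
        rw [← TensorProduct.smul_tmul, ← Algebra.algebraMap_eq_smul_one,
          IsLocalRing.ResidueField.algebraMap_eq]
        rfl
      | add x y hx hy =>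
        obtain ⟨a, ha⟩ := hx; obtain ⟨b, hb⟩ := hy
        exact ⟨a + b, by rw [map_add, ha, hb]⟩
    have hkerj : ∀ w : R, j w = 0 →
        w ∈ (IsLocalRing.maximalIdeal O) • (⊤ : Submodule O R) := by
      intro w h
      set I := IsLocalRing.maximalIdeal O
      set e := TensorProduct.quotTensorEquivQuotSMul R I
      have heq : e ((Ideal.Quotient.mk I 1) ⊗ₜ[O] w) = Submodule.Quotient.mk ((1:O) • w) :=
        TensorProduct.quotTensorEquivQuotSMul_mk_tmul I 1 w
      rw [one_smul] at heq
      have hz : ((Ideal.Quotient.mk I 1) ⊗ₜ[O] w : TensorProduct O (O ⧸ I) R) = 0 := h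
      have h0 : e ((Ideal.Quotient.mk I 1) ⊗ₜ[O] w) = 0 := by rw [hz, map_zero]
      rw [heq] at h0
      exact (Submodule.Quotient.mk_eq_zero _).mp h0
    obtain ⟨r, hr⟩ := hjsurj x
    set A := Algebra.adjoin O {r} with hA
    have hsup : (⊤ : Submodule O R) ≤
        Subalgebra.toSubmodule A ⊔ (IsLocalRing.maximalIdeal O) • ⊤ := by
      intro z _
      have hz : j z ∈ Algebra.adjoin κ {x} := by rw [hx]; trivial
      rw [Algebra.adjoin_singleton_eq_range_aeval, AlgHom.mem_range] at hz
      obtain ⟨q, hq⟩ := hz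
      obtain ⟨Q, rfl⟩ := Polynomial.map_surjective (algebraMap O κ)
        (by rw [IsLocalRing.ResidueField.algebraMap_eq]; exact Ideal.Quotient.mk_surjective) q
      rw [Polynomial.aeval_map_algebraMap] at hq
      have hq2 : aeval x Q = j (aeval r Q) := by
        rw [← hr, ← Polynomial.aeval_algHom_apply]
      have hw : j (z - aeval r Q) = 0 := by
        rw [map_sub, ← hq, hq2, sub_self]
      have hwmem := hkerj _ hw
      have hmem : aeval r Q ∈ Subalgebra.toSubmodule A := by
        rw [Subalgebra.mem_toSubmodule, hA, Algebra.adjoin_singleton_eq_range_aeval]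
        exact ⟨Q, rfl⟩
      have : z = aeval r Q + (z - aeval r Q) := by ring
      rw [this]
      exact Submodule.add_mem_sup hmem hwmem
    have hle : (⊤ : Submodule O R) ≤ Subalgebra.toSubmodule A :=
      Submodule.le_of_le_smul_of_le_jacobson_bot (Module.finite_def.mp hfinR)
        (IsLocalRing.maximalIdeal_le_jacobson ⊥) hsup
    have hAtop : A = ⊤ := by
      rwa [← Algebra.toSubmodule_eq_top, ← top_le_iff]
    have hsurj : Function.Surjective (aeval r : O[X] →ₐ[O] R) := by
      intro y
      have hy : y ∈ A := by rw [hAtop]; trivial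
      rw [hA, Algebra.adjoin_singleton_eq_range_aeval, AlgHom.mem_range] at hy
      obtain ⟨q, hq⟩ := hy
      exact ⟨q, hq⟩
    obtain ⟨P, hm, hd, _, hequiv⟩ := aux_key O n hn R hrank (aeval r) hsurj
    exact ⟨⟨r, hAtop⟩, P, hm, hd, hequiv⟩
  · intro R' _ _ _ hr' φ hφ
    obtain ⟨P, hm, hd, hker, _⟩ := aux_key O n hn R' hr' φ hφ
    exact ⟨P, hm, hd, hker⟩
end
end
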